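/- Let n ≥ 2 and let x = (x_1,…,x_n) be a tuple with each x_i ∈ {0,…,n−1} and x_1 + ⋯ + x_n ≡ (n−1)(n−2)/2 (mod n). Then there exists exactly one j ∈ {0, 1, …, n−1} such that the coordinate sum of shift^j(x) equals (n−1)(n−2)/2 and sort(shift^j(x)) is dominated by δ_n. -/
import Mathlib


/-- The tuple `δ_n = (n-2, n-3, …, 1, 0, 0)`: its `i`-th coordinate (0-indexed) is
`n - 2 - i` (natural subtraction). -/
def deltaTuple (n : ℕ) : Fin n → ℕ := fun i => n - 2 - (i : ℕ)

/-- A tuple `μ` of length `n` is dominated by `δ_n` if all its partial sums are bounded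
by the corresponding partial sums of `δ_n`. -/
def dominatedByDelta (n : ℕ) (l : Fin n → ℕ) : Prop :=
  ∀ k : ℕ, k ≤ n →
    ∑ i ∈ Finset.univ.filter (fun i : Fin n => (i : ℕ) < k), l i ≤
      ∑ i ∈ Finset.univ.filter (fun i : Fin n => (i : ℕ) < k), deltaTuple n i

/-- The shift map: add `1` to every coordinate and reduce modulo `n` so as to lie in
`{0,…,n-1}`. -/
def shiftMod (n : ℕ) {N : ℕ} (x : Fin N → ℕ) : Fin N → ℕ :=
  fun i => (x i + 1) % n

/-- The weakly decreasing rearrangement of a tuple. -/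
def sortDesc {N : ℕ} {α : Type*} [LinearOrder α] (x : Fin N → α) : Fin N → α :=
  fun i => x (Tuple.sort x i.rev)


open Finset

section aux
variable {n : ℕ}

/-- iterated shift closed form -/
lemma shift_iter (n : ℕ) (x : Fin n → ℕ) (i : Fin n) (hx : x i < n) (j : ℕ) :
    (shiftMod n)^[j] x i = (x i + j) % n := by
  induction j with
  | zero => simp [Nat.mod_eq_of_lt hx]
  | succ j ih =>
      rw [Function.iterate_succ_apply', shiftMod, ih, Nat.mod_add_mod, Nat.add_assoc]

lemma filter_lt_zero' : (univ.filter fun i : Fin n => (i : ℕ) < 0) = ∅ := by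
  simp

lemma filter_lt_succ (k : ℕ) (hk : k < n) :
    (univ.filter fun i : Fin n => (i : ℕ) < k + 1) =
      insert ⟨k, hk⟩ (univ.filter fun i : Fin n => (i : ℕ) < k) := by
  ext i
  simp only [mem_filter, mem_univ, true_and, mem_insert]
  constructor
  · intro h
    rcases Nat.lt_succ_iff_lt_or_eq.mp h with h | h
    · exact Or.inr h
    · exact Or.inl (Fin.ext h)
  · rintro (rfl | h)
    · exact Nat.lt_succ_self k
    · exact Nat.lt_succ_of_lt h

lemma filter_lt_of_ge (k : ℕ) (hk : n ≤ k) :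
    (univ.filter fun i : Fin n => (i : ℕ) < k) = univ := by
  ext i; simp [lt_of_lt_of_le i.isLt hk]

lemma card_filter_lt (k : ℕ) (hk : k ≤ n) :
    (univ.filter fun i : Fin n => (i : ℕ) < k).card = k := by
  induction k with
  | zero => simp
  | succ k ih =>
      rw [filter_lt_succ k (by omega)]
      rw [card_insert_of_notMem (by simp)]
      rw [ih (by omega)]
end aux
section bsums
open Finset

/-- target sum -/
def Tn (n : ℕ) : ℕ := (n - 1) * (n - 2) / 2

/-- partial sums of the staircase -/
def Bn (n k : ℕ) : ℕ := ∑ i ∈ univ.filter (fun i : Fin n => (i : ℕ) < k), deltaTuple n i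

lemma Tn_cast (n : ℕ) (hn : 2 ≤ n) : (Tn n : ℤ) * 2 = ((n : ℤ) - 1) * ((n : ℤ) - 2) := by
  have h2 : 2 ∣ (n - 1) * (n - 2) := by
    have h := (Nat.even_mul_succ_self (n - 2)).two_dvd
    have e : n - 2 + 1 = n - 1 := by omega
    rw [e, Nat.mul_comm] at h
    exact h
  have key : (Tn n) * 2 = (n - 1) * (n - 2) := Nat.div_mul_cancel h2
  have h1 : ((n : ℤ) - 1) = ((n - 1 : ℕ) : ℤ) :=
    (Nat.cast_sub (by omega : 1 ≤ n)).symm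
  have h2' : ((n : ℤ) - 2) = ((n - 2 : ℕ) : ℤ) :=
    (Nat.cast_sub (by omega : 2 ≤ n)).symm
  rw [h1, h2']
  exact_mod_cast congrArg (fun m : ℕ => (m : ℤ)) key

lemma Bn_zero (n : ℕ) : Bn n 0 = 0 := by simp [Bn]

lemma Bn_succ (n k : ℕ) (hk : k < n) : Bn n (k + 1) = Bn n k + (n - 2 - k) := by
  unfold Bn
  rw [filter_lt_succ k hk, Finset.sum_insert (by simp)]
  simp [deltaTuple]
  ring

lemma Bn_cast (n : ℕ) (hn : 2 ≤ n) :
    ∀ k, k ≤ n - 1 → (Bn n k : ℤ) * 2 = k * (2 * n - 3 - k) := by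
  intro k
  induction k with
  | zero => simp [Bn_zero]
  | succ k ih =>
      intro hk
      rw [Bn_succ n k (by omega)]
      have h1 : (Bn n k : ℤ) * 2 = k * (2 * n - 3 - k) := ih (by omega)
      have h2 : ((n - 2 - k : ℕ) : ℤ) = (n : ℤ) - 2 - k := by omega
      push_cast
      push_cast at h1
      rw [h2]
      nlinarith [h1]

lemma Bn_pred (n : ℕ) (hn : 2 ≤ n) : Bn n (n - 1) = Tn n := by
  have h1 := Bn_cast n hn (n - 1) le_rfl
  have h2 := Tn_cast n hn
  have hc : ((n - 1 : ℕ) : ℤ) = (n : ℤ) - 1 := by omega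
  rw [hc] at h1
  have h3 : (Bn n (n - 1) : ℤ) * 2 = (Tn n : ℤ) * 2 := by rw [h1, h2]; ring
  omega

lemma Bn_top (n : ℕ) (hn : 2 ≤ n) : Bn n n = Tn n := by
  have h := Bn_succ n (n - 1) (by omega)
  have h2 : n - 1 + 1 = n := by omega
  rw [h2] at h
  rw [h, Bn_pred n hn]
  have : n - 2 - (n - 1) = 0 := by omega
  omega
section sorting
open Finset
variable {n : ℕ}

lemma sortDesc_antitone (y : Fin n → ℕ) : Antitone (sortDesc y) := by
  intro i j hij
  exact Tuple.monotone_sort y (Fin.rev_le_rev.mpr hij)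

lemma sortDesc_apply (y : Fin n → ℕ) (i : Fin n) :
    sortDesc y i = y ((Fin.revPerm.trans (Tuple.sort y)) i) := rfl

lemma card_filter_sortDesc (y : Fin n → ℕ) (P : ℕ → Prop) [DecidablePred P] :
    (univ.filter fun i => P (sortDesc y i)).card = (univ.filter fun i => P (y i)).card := by
  set e := Fin.revPerm.trans (Tuple.sort y) with he
  apply Finset.card_bij (fun i _ => e i)
  · intro a ha
    simp only [mem_filter, mem_univ, true_and] at ha ⊢
    exact ha
  · intro a _ b _ hab
    exact e.injective hab
  · intro b hb
    refine ⟨e.symm b, ?_, by simp⟩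
    simp only [mem_filter, mem_univ, true_and] at hb ⊢
    show P (y (e (e.symm b)))
    simpa using hb

lemma sum_filter_sortDesc (y : Fin n → ℕ) (P : ℕ → Prop) [DecidablePred P] :
    ∑ i ∈ univ.filter (fun i => P (sortDesc y i)), sortDesc y i =
      ∑ i ∈ univ.filter (fun i => P (y i)), y i := by
  set e := Fin.revPerm.trans (Tuple.sort y) with he
  apply Finset.sum_bij (fun i _ => e i)
  · intro a ha
    simp only [mem_filter, mem_univ, true_and] at ha ⊢
    exact ha
  · intro a _ b _ hab
    exact e.injective hab
  · intro b hb
    refine ⟨e.symm b, ?_, by simp⟩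
    simp only [mem_filter, mem_univ, true_and] at hb ⊢
    show P (y (e (e.symm b)))
    simpa using hb
  · intro a _
    rfl

lemma sum_sortDesc (y : Fin n → ℕ) : ∑ i, sortDesc y i = ∑ i, y i :=
  Equiv.sum_comp (Fin.revPerm.trans (Tuple.sort y)) y

lemma sortDesc_lt (y : Fin n → ℕ) (hy : ∀ i, y i < n) (i : Fin n) : sortDesc y i < n :=
  hy _

/-- level sets of an antitone function are initial segments -/
lemma antitone_filter_eq (g : Fin n → ℕ) (hg : Antitone g) (c d : ℕ)
    (hcard : (univ.filter fun i => c ≤ g i).card = d) :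
    (univ.filter fun i => c ≤ g i) = univ.filter fun i : Fin n => (i : ℕ) < d := by
  have hdn : d ≤ n := by
    rw [← hcard]
    exact (card_filter_le _ _).trans (by simp)
  ext i
  simp only [mem_filter, mem_univ, true_and]
  constructor
  · intro hi
    by_contra hid
    push_neg at hid
    have hsub : (univ.filter fun j : Fin n => (j : ℕ) < (i : ℕ) + 1) ⊆
        (univ.filter fun j => c ≤ g j) := by
      intro j hj
      simp only [mem_filter, mem_univ, true_and] at hj ⊢
      have : j ≤ i := by
        rw [Fin.le_def]; omega
      exact le_trans hi (hg this)
    have := Finset.card_le_card hsub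
    rw [card_filter_lt ((i : ℕ) + 1) i.isLt, hcard] at this
    omega
  · intro hid
    by_contra hi
    push_neg at hi
    have hsub : (univ.filter fun j => c ≤ g j) ⊆
        (univ.filter fun j : Fin n => (j : ℕ) < (i : ℕ)) := by
      intro j hj
      simp only [mem_filter, mem_univ, true_and] at hj ⊢
      by_contra hj2
      push_neg at hj2
      have : i ≤ j := by rw [Fin.le_def]; omega
      have := hg this
      omega
    have := Finset.card_le_card hsub
    rw [card_filter_lt (i : ℕ) (le_of_lt i.isLt), hcard] at this
    omega

/-- top-`d` sum of the sorted tuple equals the sum over a level set -/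
lemma topsum_level (y : Fin n → ℕ) (c d : ℕ)
    (hcard : (univ.filter fun i => c ≤ y i).card = d) :
    ∑ i ∈ univ.filter (fun i : Fin n => (i : ℕ) < d), sortDesc y i =
      ∑ i ∈ univ.filter (fun i => c ≤ y i), y i := by
  have h1 : (univ.filter fun i => c ≤ sortDesc y i).card = d := by
    rw [card_filter_sortDesc y (fun t => c ≤ t)]; exact hcard
  have h2 := antitone_filter_eq (sortDesc y) (sortDesc_antitone y) c d h1
  rw [← h2]
  exact sum_filter_sortDesc y (fun t => c ≤ t)

end sorting
section shifts
open Finset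

lemma Bn_id1 (n d : ℕ) (hn : 2 ≤ n) (hd1 : 1 ≤ d) (hd2 : d ≤ n - 1) :
    (Bn n d : ℤ) * 2 + (Bn n (n - d) : ℤ) * 2 + 2 =
      (Tn n : ℤ) * 2 + ((n : ℤ) - d) * d * 2 := by
  have h1 := Bn_cast n hn d hd2
  have h2 := Bn_cast n hn (n - d) (by omega)
  have h3 := Tn_cast n hn
  have hc : ((n - d : ℕ) : ℤ) = (n : ℤ) - d := by omega
  rw [hc] at h2
  rw [h1, h2, h3]
  ring

lemma Bn_id2 (n d : ℕ) (hn : 2 ≤ n) (hd1 : 1 ≤ d) (hd2 : d ≤ n - 1) :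
    (n : ℤ) * ((Bn n d : ℤ) * 2) + 2 * n =
      (d : ℤ) * ((Tn n : ℤ) * 2) + (n : ℤ) * d * ((n : ℤ) - d) + 2 * ((n : ℤ) - d) := by
  have h1 := Bn_cast n hn d hd2
  have h3 := Tn_cast n hn
  rw [h1, h3]
  ring

lemma zval_wrap {n d a : ℕ} (hd : d ≤ n) (ha : a < n) (hw : n ≤ a + d) : (a + d) % n = a + d - n := by
  rw [Nat.mod_eq_sub_mod hw, Nat.mod_eq_of_lt (by omega)]

lemma zval_nowrap {n d a : ℕ} (h : a + d < n) : (a + d) % n = a + d :=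
  Nat.mod_eq_of_lt h

lemma zval_int {n d : ℕ} (hd : d ≤ n) {a : ℕ} (ha : a < n) :
    (((a + d) % n : ℕ) : ℤ) = (a : ℤ) + d - n * (if n ≤ a + d then 1 else 0) := by
  by_cases hw : n ≤ a + d
  · rw [if_pos hw, zval_wrap hd ha hw, Nat.cast_sub hw]; push_cast; ring
  · rw [if_neg hw, zval_nowrap (by omega)]; omega

lemma shift_sum_int (n d : ℕ) (hd : d ≤ n) (y : Fin n → ℕ) (hy : ∀ i, y i < n) :
    ((∑ i, (y i + d) % n : ℕ) : ℤ) =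
      ((∑ i, y i : ℕ) : ℤ) + n * d - n * ((univ.filter fun i => n ≤ y i + d).card : ℤ) := by
  rw [Nat.cast_sum, Nat.cast_sum]
  rw [Finset.sum_congr rfl (fun i _ => zval_int hd (hy i))]
  rw [Finset.sum_sub_distrib, Finset.sum_add_distrib, ← Finset.mul_sum, Finset.sum_boole]
  simp only [Finset.sum_const, Finset.card_univ, Fintype.card_fin, nsmul_eq_mul]

end shifts
section uniq
open Finset

lemma uniq_aux (n : ℕ) (hn : 2 ≤ n) (y : Fin n → ℕ) (hy : ∀ i, y i < n)
    (hsy : ∑ i, y i = Tn n) (hdom : dominatedByDelta n (sortDesc y))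
    (d : ℕ) (hd1 : 1 ≤ d) (hd2 : d ≤ n - 1)
    (hsz : ∑ i, (y i + d) % n = Tn n)
    (hdomz : dominatedByDelta n (sortDesc (fun i => (y i + d) % n))) : False := by
  set z : Fin n → ℕ := fun i => (y i + d) % n with hz
  have hdn : d ≤ n := by omega
  -- number of wrapped coordinates is d
  have hsum := shift_sum_int n d hdn y hy
  rw [hsz, hsy] at hsum
  have hwcard : (univ.filter fun i => n ≤ y i + d).card = d := by
    have hn0 : (n : ℤ) ≠ 0 := by exact_mod_cast (by omega : n ≠ 0)
    have : (n : ℤ) * ((univ.filter fun i => n ≤ y i + d).card : ℤ) = (n : ℤ) * d := by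
      linarith
    exact_mod_cast mul_left_cancel₀ hn0 this
  have hfilter_eq : (univ.filter fun i : Fin n => n ≤ y i + d) =
      (univ.filter fun i : Fin n => n - d ≤ y i) := by
    ext i; simp only [mem_filter, mem_univ, true_and]; omega
  have hwcard' : (univ.filter fun i : Fin n => n - d ≤ y i).card = d := by
    rw [← hfilter_eq]; exact hwcard
  -- W = sum of wrapped coordinates, bounded by Bn n d
  set W := ∑ i ∈ univ.filter (fun i : Fin n => n - d ≤ y i), y i with hWdef
  have htop := topsum_level y (n - d) d hwcard'
  have hWle : W ≤ Bn n d := by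
    have h1 := hdom d (by omega)
    rw [htop] at h1
    exact h1
  -- the filter of large entries of z
  have hzwrap : ∀ i : Fin n, n ≤ y i + d → z i = y i + d - n :=
    fun i h => zval_wrap hdn (hy i) h
  have hznw : ∀ i : Fin n, ¬ n ≤ y i + d → z i = y i + d :=
    fun i h => zval_nowrap (by omega)
  have hzfilter : (univ.filter fun i => d ≤ z i) =
      univ.filter (fun i : Fin n => ¬ n ≤ y i + d) := by
    ext i; simp only [mem_filter, mem_univ, true_and]
    by_cases h : n ≤ y i + d
    · rw [hzwrap i h]
      have := hy i
      simp only [h, not_true_eq_false, iff_false]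
      omega
    · rw [hznw i h]
      simp only [h, not_false_eq_true, iff_true]
      omega
  have hNWcard : (univ.filter (fun i : Fin n => ¬ n ≤ y i + d)).card = n - d := by
    have htot := Finset.card_filter_add_card_filter_not
      (s := (univ : Finset (Fin n))) (p := fun i : Fin n => n ≤ y i + d)
    simp only [Finset.card_univ, Fintype.card_fin] at htot
    omega
  have hzcard : (univ.filter fun i => d ≤ z i).card = n - d := by
    rw [hzfilter]; exact hNWcard
  have hztop := topsum_level z d (n - d) hzcard
  -- evaluate the top sum of z
  have hzsum_eval : ∑ i ∈ univ.filter (fun i => d ≤ z i), z i =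
      (∑ i ∈ univ.filter (fun i : Fin n => ¬ n ≤ y i + d), y i) + (n - d) * d := by
    rw [hzfilter]
    rw [Finset.sum_congr rfl (fun i hi => hznw i (by
      simpa using (Finset.mem_filter.mp hi).2))]
    rw [Finset.sum_add_distrib, Finset.sum_const, hNWcard, smul_eq_mul]
  -- split the total sum
  have hNWsum : W + (∑ i ∈ univ.filter (fun i : Fin n => ¬ n ≤ y i + d), y i) = Tn n := by
    have hsp := Finset.sum_filter_add_sum_filter_not univ (fun i : Fin n => n ≤ y i + d) y
    rw [hsy] at hsp
    rw [hWdef, ← hfilter_eq]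
    exact hsp
  -- dominance of z at n - d
  have hZle : (∑ i ∈ univ.filter (fun i : Fin n => ¬ n ≤ y i + d), y i) + (n - d) * d ≤
      Bn n (n - d) := by
    have h2 := hdomz (n - d) (by omega)
    rw [hztop, hzsum_eval] at h2
    exact h2
  -- contradiction
  set SNW := ∑ i ∈ univ.filter (fun i : Fin n => ¬ n ≤ y i + d), y i with hSNW
  have hid := Bn_id1 n d hn hd1 hd2
  have hnd : ((n - d : ℕ) : ℤ) = (n : ℤ) - d := by omega
  have c1 : (W : ℤ) ≤ (Bn n d : ℤ) := by exact_mod_cast hWle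
  have c2 : (SNW : ℤ) + ((n : ℤ) - d) * d ≤ (Bn n (n - d) : ℤ) := by
    have hc : ((SNW + (n - d) * d : ℕ) : ℤ) ≤ ((Bn n (n - d) : ℕ) : ℤ) := by
      exact_mod_cast hZle
    push_cast at hc
    rw [hnd] at hc
    exact hc
  have c3 : (W : ℤ) + (SNW : ℤ) = (Tn n : ℤ) := by exact_mod_cast hNWsum
  linarith

end uniq
section squares
open Finset

lemma zval_sq_int {n d : ℕ} (hd : d ≤ n) {a : ℕ} (ha : a < n) :
    (((a + d) % n) ^ 2 : ℕ) =
      (((a : ℤ) + d) ^ 2 - (if n ≤ a + d then 2 * n * (a : ℤ) + (2 * n * d - (n:ℤ) ^ 2) else 0)) := by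
  by_cases hw : n ≤ a + d
  · rw [if_pos hw, zval_wrap hd ha hw]
    push_cast [Nat.cast_sub hw]
    ring
  · rw [if_neg hw, zval_nowrap (by omega)]
    push_cast
    ring

lemma shift_sq_int (n d : ℕ) (hd : d ≤ n) (y : Fin n → ℕ) (hy : ∀ i, y i < n) :
    ((∑ i, ((y i + d) % n) ^ 2 : ℕ) : ℤ) =
      (∑ i, ((y i : ℤ) + d) ^ 2) -
        (2 * n * (∑ i ∈ univ.filter (fun i => n ≤ y i + d), (y i : ℤ)) +
          ((univ.filter fun i : Fin n => n ≤ y i + d).card : ℤ) * (2 * n * d - (n:ℤ) ^ 2)) := by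
  rw [Nat.cast_sum]
  rw [Finset.sum_congr rfl (fun i _ => zval_sq_int hd (hy i))]
  rw [Finset.sum_sub_distrib]
  congr 1
  rw [← Finset.sum_filter]
  rw [Finset.sum_add_distrib, Finset.sum_const, ← Finset.mul_sum, nsmul_eq_mul]

lemma sum_add_sq (n d : ℕ) (y : Fin n → ℕ) :
    (∑ i, ((y i : ℤ) + d) ^ 2) =
      (∑ i, (y i : ℤ) ^ 2) + 2 * d * (∑ i, (y i : ℤ)) + n * (d:ℤ) ^ 2 := by
  have : ∀ i : Fin n, ((y i : ℤ) + d) ^ 2 = (y i : ℤ) ^ 2 + 2 * d * (y i : ℤ) + (d:ℤ)^2 := by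
    intro i; ring
  rw [Finset.sum_congr rfl (fun i _ => this i)]
  rw [Finset.sum_add_distrib, Finset.sum_add_distrib, ← Finset.mul_sum, Finset.sum_const,
    Finset.card_univ, Fintype.card_fin, nsmul_eq_mul]

end squares
section descent
open Finset

lemma descent (n : ℕ) (hn : 2 ≤ n) (y : Fin n → ℕ) (hy : ∀ i, y i < n)
    (hsy : ∑ i, y i = Tn n)
    (hnotdom : ¬ dominatedByDelta n (sortDesc y)) :
    ∃ d, 1 ≤ d ∧ d ≤ n - 1 ∧ (∑ i, (y i + d) % n) = Tn n ∧
      (∑ i, ((y i + d) % n) ^ 2) < ∑ i, y i ^ 2 := by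
  classical
  set g := sortDesc y with hg
  have hganti : Antitone g := sortDesc_antitone y
  set g' : ℕ → ℕ := fun m => if h : m < n then g ⟨m, h⟩ else 0 with hg'
  set F : ℕ → ℤ := fun k =>
    ((∑ i ∈ univ.filter (fun i : Fin n => (i : ℕ) < k), g i : ℕ) : ℤ) - (Bn n k : ℤ) with hF
  have hF0 : F 0 = 0 := by simp [hF, Bn_zero]
  have hFstep : ∀ k, k < n → F (k + 1) = F k + (g' k : ℤ) - ((n - 2 - k : ℕ) : ℤ) := by
    intro k hk
    simp only [hF, hg']
    rw [filter_lt_succ k hk, Finset.sum_insert (by simp), Bn_succ n k hk, dif_pos hk]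
    push_cast
    ring
  have hsumg : (∑ i, g i) = Tn n := by rw [hg, sum_sortDesc, hsy]
  have hFn : F n = 0 := by
    simp only [hF]
    rw [filter_lt_of_ge n le_rfl, Bn_top n hn, hsumg]
    ring
  have hFpred : F (n - 1) ≤ 0 := by
    have hstep := hFstep (n - 1) (by omega)
    rw [show n - 1 + 1 = n by omega] at hstep
    have h0 : ((n - 2 - (n - 1) : ℕ) : ℤ) = 0 := by
      norm_cast
      omega
    rw [hFn, h0] at hstep
    have : (0 : ℤ) ≤ (g' (n - 1) : ℤ) := by positivity
    linarith
  -- a point where dominance fails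
  have hex : ∃ k0, k0 ≤ n ∧ 0 < F k0 := by
    unfold dominatedByDelta at hnotdom
    push_neg at hnotdom
    obtain ⟨k, hk, hlt⟩ := hnotdom
    refine ⟨k, hk, ?_⟩
    have hB : (∑ i ∈ univ.filter (fun i : Fin n => (i : ℕ) < k), deltaTuple n i) = Bn n k := rfl
    rw [hB] at hlt
    simp only [hF]
    have : (Bn n k : ℤ) < ((∑ i ∈ univ.filter (fun i : Fin n => (i : ℕ) < k), g i : ℕ) : ℤ) := by
      exact_mod_cast hlt
    linarith
  obtain ⟨k0, hk0n, hk0pos⟩ := hex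
  -- minimal maximizer K
  have hmax : ∃ K, K ≤ n ∧ ∀ m, m ≤ n → F m ≤ F K := by
    obtain ⟨b, hb, hbmax⟩ := Finset.exists_max_image (Finset.range (n + 1)) F ⟨0, by simp⟩
    refine ⟨b, by simpa [Finset.mem_range, Nat.lt_succ_iff] using hb, fun m hm => ?_⟩
    exact hbmax m (by simp [Finset.mem_range]; omega)
  set K := Nat.find hmax with hKdef
  obtain ⟨hKn, hKmax⟩ := Nat.find_spec hmax
  rw [← hKdef] at hKn hKmax
  have hKlt : ∀ k, k < K → F k < F K := by
    intro k hk
    have hnot := Nat.find_min hmax hk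
    push_neg at hnot
    obtain ⟨m, hm, hFm⟩ := hnot (by omega)
    exact lt_of_lt_of_le hFm (hKmax m hm)
  have hMpos : 0 < F K := lt_of_lt_of_le hk0pos (hKmax k0 hk0n)
  have hK1 : 1 ≤ K := by
    rcases Nat.eq_zero_or_pos K with h | h
    · rw [h, hF0] at hMpos; omega
    · exact h
  have hKn2 : K ≤ n - 2 := by
    by_contra hcon
    push_neg at hcon
    have : K = n - 1 ∨ K = n := by omega
    rcases this with h | h <;> rw [h] at hMpos <;> omega
  -- bounds on the sorted values around K
  have hglow : n - K ≤ g' (K - 1) := by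
    have hlt := hKlt (K - 1) (by omega)
    have hstep := hFstep (K - 1) (by omega)
    rw [show K - 1 + 1 = K by omega] at hstep
    have hcast : ((n - 2 - (K - 1) : ℕ) : ℤ) = (n : ℤ) - 1 - K := by omega
    rw [hcast] at hstep
    omega
  have hghigh : g' K ≤ n - 2 - K := by
    have hle := hKmax (K + 1) (by omega)
    have hstep := hFstep K (by omega)
    have hcast : ((n - 2 - K : ℕ) : ℤ) = (n : ℤ) - 2 - K := by omega
    rw [hcast] at hstep
    omega
  -- level set on g
  have hlevel : (univ.filter fun i : Fin n => n - K ≤ g i) =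
      univ.filter fun i : Fin n => (i : ℕ) < K := by
    ext i
    simp only [mem_filter, mem_univ, true_and]
    constructor
    · intro hgi
      by_contra hiK
      push_neg at hiK
      have hle : (⟨K, by omega⟩ : Fin n) ≤ i := by rw [Fin.le_def]; simpa using hiK
      have h1 : g i ≤ g ⟨K, by omega⟩ := hganti hle
      have h2 : g' K = g ⟨K, by omega⟩ := dif_pos (by omega)
      omega
    · intro hiK
      have hle : i ≤ (⟨K - 1, by omega⟩ : Fin n) := by rw [Fin.le_def]; simp; omega
      have h1 : g ⟨K - 1, by omega⟩ ≤ g i := hganti hle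
      have h2 : g' (K - 1) = g ⟨K - 1, by omega⟩ := dif_pos (by omega)
      omega
  have hcardg : (univ.filter fun i : Fin n => n - K ≤ g i).card = K := by
    rw [hlevel, card_filter_lt K (by omega)]
  have hcardy : (univ.filter fun i : Fin n => n - K ≤ y i).card = K := by
    have := card_filter_sortDesc y (fun t => n - K ≤ t)
    rw [← hg] at this
    rw [← this, hcardg]
  -- wrapped filter and its sum
  have hfilter_eq : (univ.filter fun i : Fin n => n ≤ y i + K) =
      (univ.filter fun i : Fin n => n - K ≤ y i) := by
    ext i; simp only [mem_filter, mem_univ, true_and]; omega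
  have hcardwrap : (univ.filter fun i : Fin n => n ≤ y i + K).card = K := by
    rw [hfilter_eq]; exact hcardy
  set W := ∑ i ∈ univ.filter (fun i : Fin n => n ≤ y i + K), y i with hWdef
  have htop := topsum_level y (n - K) K hcardy
  rw [← hg] at htop
  have hWeq : (∑ i ∈ univ.filter (fun i : Fin n => (i : ℕ) < K), g i) = W := by
    rw [htop, hWdef, hfilter_eq]
  have hWge : (Bn n K : ℤ) + 1 ≤ (W : ℤ) := by
    have : F K = (W : ℤ) - (Bn n K : ℤ) := by
      simp only [hF]
      rw [hWeq]
    omega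
  -- the shift by K has the right sum
  refine ⟨K, hK1, by omega, ?_, ?_⟩
  · have hs := shift_sum_int n K (by omega) y hy
    rw [hcardwrap, hsy] at hs
    have : ((∑ i, (y i + K) % n : ℕ) : ℤ) = ((Tn n : ℕ) : ℤ) := by rw [hs]; ring
    exact_mod_cast this
  · -- squares decrease
    have hsq := shift_sq_int n K (by omega) y hy
    rw [hcardwrap, sum_add_sq] at hsq
    have hWcast : (∑ i ∈ univ.filter (fun i : Fin n => n ≤ y i + K), (y i : ℤ)) = (W : ℤ) := by
      rw [hWdef]
      push_cast
      rfl
    rw [hWcast] at hsq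
    have hsycast : (∑ i, (y i : ℤ)) = (Tn n : ℤ) := by
      rw [← Nat.cast_sum, hsy]
    rw [hsycast] at hsq
    have hid := Bn_id2 n K hn hK1 (by omega)
    have h2nW : 2 * (n : ℤ) * ((Bn n K : ℤ) + 1) ≤ 2 * n * (W : ℤ) :=
      mul_le_mul_of_nonneg_left hWge (by positivity)
    have hfin : ((∑ i, ((y i + K) % n) ^ 2 : ℕ) : ℤ) + 2 * ((n : ℤ) - K) ≤
        ((∑ i, y i ^ 2 : ℕ) : ℤ) := by
      have hy2 : ((∑ i, y i ^ 2 : ℕ) : ℤ) = ∑ i, (y i : ℤ) ^ 2 := by push_cast; rfl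
      rw [hy2]
      have key : (K:ℤ) * (2 * (Tn n : ℤ)) + (n:ℤ) * K * ((n:ℤ) - K) + 2 * ((n:ℤ) - K) ≤
          2 * (n:ℤ) * (W : ℤ) := by linarith [hid, h2nW]
      linarith [hsq, key]
    have hKn' : (K : ℤ) ≤ (n : ℤ) - 2 := by omega
    have : ((∑ i, ((y i + K) % n) ^ 2 : ℕ) : ℤ) < ((∑ i, y i ^ 2 : ℕ) : ℤ) := by linarith
    exact_mod_cast this

end descent
section crossing
open Finset

lemma Tn_two (n : ℕ) (hn : 2 ≤ n) : Tn n * 2 = (n - 1) * (n - 2) := by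
  have h2 : 2 ∣ (n - 1) * (n - 2) := by
    have h := (Nat.even_mul_succ_self (n - 2)).two_dvd
    have e : n - 2 + 1 = n - 1 := by omega
    rw [e, Nat.mul_comm] at h
    exact h
  exact Nat.div_mul_cancel h2

lemma rot_sum (n : ℕ) (hn : 1 ≤ n) (a : ℕ) :
    ∑ j ∈ Finset.range n, (a + j) % n = ∑ j ∈ Finset.range n, j % n := by
  induction a with
  | zero => simp
  | succ a ih =>
      have hpt : ∑ j ∈ Finset.range n, (a + 1 + j) % n =
          ∑ j ∈ Finset.range n, (a + (j + 1)) % n :=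
        Finset.sum_congr rfl (fun j _ => by rw [show a + 1 + j = a + (j + 1) by omega])
      have h1 := Finset.sum_range_succ' (fun t => (a + t) % n) n
      have h2 := Finset.sum_range_succ (fun t => (a + t) % n) n
      have h3 : (a + n) % n = (a + 0) % n := by
        rw [Nat.add_mod_right, Nat.add_zero]
      rw [hpt]
      omega

lemma sum_mod_range (n : ℕ) (hn : 2 ≤ n) :
    ∑ j ∈ Finset.range n, j % n = Tn n + (n - 1) := by
  have h1 : ∑ j ∈ Finset.range n, j % n = ∑ j ∈ Finset.range n, j :=
    Finset.sum_congr rfl (fun j hj => Nat.mod_eq_of_lt (Finset.mem_range.mp hj))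
  have h2 := Finset.sum_range_id_mul_two n
  have h2' : ((∑ j ∈ Finset.range n, j : ℕ) : ℤ) * 2 = (n : ℤ) * ((n : ℤ) - 1) := by
    have hc : ((n - 1 : ℕ) : ℤ) = (n : ℤ) - 1 := by omega
    rw [← hc]
    exact_mod_cast h2
  have h3' : ((Tn n : ℕ) : ℤ) * 2 = ((n : ℤ) - 1) * ((n : ℤ) - 2) := Tn_cast n hn
  have key : ((∑ j ∈ Finset.range n, j : ℕ) : ℤ) * 2 =
      ((Tn n : ℕ) : ℤ) * 2 + 2 * ((n : ℤ) - 1) := by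
    rw [h2', h3']
    ring
  rw [h1]
  omega

lemma shift_total (n : ℕ) (hn : 2 ≤ n) (x : Fin n → ℕ) :
    ∑ j ∈ Finset.range n, (∑ i, (x i + j) % n) = n * (Tn n + (n - 1)) := by
  rw [Finset.sum_comm]
  have hrow : ∀ i : Fin n, ∑ j ∈ Finset.range n, (x i + j) % n = Tn n + (n - 1) := by
    intro i
    rw [rot_sum n (by omega) (x i), sum_mod_range n hn]
  rw [Finset.sum_congr rfl (fun i _ => hrow i)]
  simp [Finset.sum_const, Finset.card_univ, mul_comm]

lemma S_mod_congr (n : ℕ) (hn : 2 ≤ n) (x : Fin n → ℕ)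
    (hsum : ((∑ i, x i : ℕ) : ZMod n) = ((Tn n : ℕ) : ZMod n)) (j : ℕ) :
    (∑ i, (x i + j) % n) % n = Tn n % n := by
  have hcast : ((∑ i, (x i + j) % n : ℕ) : ZMod n) = ((Tn n : ℕ) : ZMod n) := by
    rw [Nat.cast_sum]
    have hpt : ∀ i : Fin n, (((x i + j) % n : ℕ) : ZMod n) =
        ((x i : ℕ) : ZMod n) + (j : ZMod n) := by
      intro i
      rw [ZMod.natCast_mod]
      push_cast
      ring
    rw [Finset.sum_congr rfl (fun i _ => hpt i)]
    rw [Finset.sum_add_distrib, Finset.sum_const, Finset.card_univ, Fintype.card_fin,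
      nsmul_eq_mul]
    rw [show ((n : ℕ) : ZMod n) = 0 from ZMod.natCast_self n]
    rw [← Nat.cast_sum, hsum]
    ring
  exact (ZMod.natCast_eq_natCast_iff' _ _ _).mp hcast

lemma eq_of_modeq_close (n a b : ℕ) (h : a % n = b % n) (h1 : b ≤ a) (h2 : a < b + n) :
    a = b := by
  have hdvd : n ∣ a - b := (Nat.modEq_iff_dvd' h1).mp (Nat.ModEq.symm h)
  rcases Nat.eq_zero_or_pos (a - b) with h0 | hpos
  · omega
  · have := Nat.le_of_dvd hpos hdvd
    omega

lemma succ_mod_le (n a : ℕ) : (a + 1) % n ≤ a % n + 1 := by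
  rw [← Nat.mod_add_mod]
  exact Nat.mod_le _ _

lemma exists_exact_sum (n : ℕ) (hn : 2 ≤ n) (x : Fin n → ℕ)
    (hsum : ((∑ i, x i : ℕ) : ZMod n) = ((Tn n : ℕ) : ZMod n)) :
    ∃ j, ∑ i, (x i + j) % n = Tn n := by
  classical
  set S : ℕ → ℕ := fun j => ∑ i, (x i + j) % n with hS
  have hmod : ∀ j, S j % n = Tn n % n := fun j => S_mod_congr n hn x hsum j
  have hstep : ∀ j, S (j + 1) ≤ S j + n := by
    intro j
    have hpt : ∀ i : Fin n, (x i + (j + 1)) % n ≤ (x i + j) % n + 1 := by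
      intro i
      rw [show x i + (j + 1) = (x i + j) + 1 by omega]
      exact succ_mod_le n (x i + j)
    calc S (j + 1) ≤ ∑ i, ((x i + j) % n + 1) := Finset.sum_le_sum (fun i _ => hpt i)
      _ = S j + n := by
          rw [Finset.sum_add_distrib, Finset.sum_const, Finset.card_univ, Fintype.card_fin,
            smul_eq_mul, mul_one]
  have htot := shift_total n hn x
  have hbelow : ∃ ja, S ja ≤ Tn n := by
    by_contra h
    push_neg at h
    have hge : ∀ j, Tn n + n ≤ S j := by
      intro j
      have h1 := h j
      by_contra hc
      push_neg at hc
      have := eq_of_modeq_close n (S j) (Tn n) (hmod j) (le_of_lt h1) hc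
      omega
    have hsum_ge : n * (Tn n + n) ≤ ∑ j ∈ Finset.range n, S j := by
      calc n * (Tn n + n) = ∑ _j ∈ Finset.range n, (Tn n + n) := by
            rw [Finset.sum_const, Finset.card_range, smul_eq_mul]
        _ ≤ ∑ j ∈ Finset.range n, S j := Finset.sum_le_sum (fun j _ => hge j)
    rw [htot] at hsum_ge
    have := Nat.le_of_mul_le_mul_left hsum_ge (by omega : 0 < n)
    omega
  have habove : ∃ jb, Tn n ≤ S jb := by
    by_contra h
    push_neg at h
    have hsum_le : ∑ j ∈ Finset.range n, S j ≤ n * (Tn n - 1) := by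
      calc ∑ j ∈ Finset.range n, S j ≤ ∑ _j ∈ Finset.range n, (Tn n - 1) :=
            Finset.sum_le_sum (fun j _ => by have := h j; omega)
        _ = n * (Tn n - 1) := by rw [Finset.sum_const, Finset.card_range, smul_eq_mul]
    rw [htot] at hsum_le
    have := Nat.le_of_mul_le_mul_left hsum_le (by omega : 0 < n)
    omega
  obtain ⟨ja, hja⟩ := hbelow
  obtain ⟨jb, hjb⟩ := habove
  have hpern : ∀ m, S (m + n) = S m := by
    intro m
    apply Finset.sum_congr rfl
    intro i _
    rw [show x i + (m + n) = (x i + m) + n by omega, Nat.add_mod_right]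
  have hlift : ∀ q m, S (m + q * n) = S m := by
    intro q
    induction q with
    | zero => intro m; simp
    | succ q ih =>
        intro m
        rw [show m + (q + 1) * n = (m + q * n) + n by ring, hpern, ih]
  have hPex : ∃ t, Tn n ≤ S (ja + t) := by
    refine ⟨jb + ja * n - ja, ?_⟩
    rw [show ja + (jb + ja * n - ja) = jb + ja * n by
      have : ja ≤ ja * n := Nat.le_mul_of_pos_right ja (by omega)
      omega]
    rw [hlift ja jb]
    exact hjb
  set k := Nat.find hPex with hk
  have hkspec : Tn n ≤ S (ja + k) := Nat.find_spec hPex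
  rcases Nat.eq_zero_or_pos k with h0 | hpos
  · refine ⟨ja, ?_⟩
    rw [h0] at hkspec
    simp only [Nat.add_zero] at hkspec
    have : S ja = Tn n := le_antisymm hja hkspec
    exact this
  · have hprev : S (ja + (k - 1)) < Tn n := by
      have := Nat.find_min hPex (by omega : k - 1 < k)
      omega
    have hstep' : S (ja + k) ≤ S (ja + (k - 1)) + n := by
      have := hstep (ja + (k - 1))
      rw [show ja + (k - 1) + 1 = ja + k by omega] at this
      exact this
    refine ⟨ja + k, ?_⟩
    exact eq_of_modeq_close n (S (ja + k)) (Tn n) (hmod _) hkspec (by omega)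

end crossing
section main
open Finset

lemma exist_good (n : ℕ) (hn : 2 ≤ n) :
    ∀ m : ℕ, ∀ y : Fin n → ℕ, (∀ i, y i < n) → (∑ i, y i = Tn n) → (∑ i, y i ^ 2 ≤ m) →
    ∃ d : ℕ, (∑ i, (y i + d) % n = Tn n) ∧
      dominatedByDelta n (sortDesc (fun i => (y i + d) % n)) := by
  intro m
  induction m with
  | zero =>
      intro y hy hsy hm
      by_cases hdom : dominatedByDelta n (sortDesc y)
      · have hfun : (fun i => (y i + 0) % n) = y :=
          funext fun i => by rw [Nat.add_zero, Nat.mod_eq_of_lt (hy i)]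
        exact ⟨0, by rw [hfun]; exact hsy, by rw [hfun]; exact hdom⟩
      · exfalso
        obtain ⟨d, _, _, _, hlt⟩ := descent n hn y hy hsy hdom
        omega
  | succ m ih =>
      intro y hy hsy hm
      by_cases hdom : dominatedByDelta n (sortDesc y)
      · have hfun : (fun i => (y i + 0) % n) = y :=
          funext fun i => by rw [Nat.add_zero, Nat.mod_eq_of_lt (hy i)]
        exact ⟨0, by rw [hfun]; exact hsy, by rw [hfun]; exact hdom⟩
      · obtain ⟨d1, hd11, hd12, hz_sum, hz_lt⟩ := descent n hn y hy hsy hdom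
        obtain ⟨d2, hsum2, hdom2⟩ := ih (fun i => (y i + d1) % n)
          (fun i => Nat.mod_lt _ (by omega)) hz_sum (by show ∑ i, ((y i + d1) % n) ^ 2 ≤ m; omega)
        have hcomp : (fun i => ((y i + d1) % n + d2) % n) =
            fun i => (y i + (d1 + d2)) % n :=
          funext fun i => by rw [Nat.mod_add_mod, Nat.add_assoc]
        refine ⟨d1 + d2, ?_, ?_⟩
        · rw [← hcomp]; exact hsum2
        · rw [← hcomp]; exact hdom2

lemma no_two (n : ℕ) (hn : 2 ≤ n) (x : Fin n → ℕ) (hx : ∀ i, x i < n)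
    (j j' : ℕ) (hjj' : j < j') (hj' : j' < n)
    (hs : ∑ i, (shiftMod n)^[j] x i = Tn n)
    (hd : dominatedByDelta n (sortDesc ((shiftMod n)^[j] x)))
    (hs' : ∑ i, (shiftMod n)^[j'] x i = Tn n)
    (hd' : dominatedByDelta n (sortDesc ((shiftMod n)^[j'] x))) : False := by
  set y : Fin n → ℕ := fun i => (x i + j) % n with hydef
  have hiterj : (shiftMod n)^[j] x = y := funext fun i => shift_iter n x i (hx i) j
  have hy : ∀ i, y i < n := fun i => Nat.mod_lt _ (by omega)
  have hd1 : 1 ≤ j' - j := by omega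
  have hd2 : j' - j ≤ n - 1 := by omega
  have hzfun : (fun i => (y i + (j' - j)) % n) = (shiftMod n)^[j'] x := by
    funext i
    rw [shift_iter n x i (hx i) j']
    show ((x i + j) % n + (j' - j)) % n = (x i + j') % n
    rw [Nat.mod_add_mod, Nat.add_assoc, show j + (j' - j) = j' by omega]
  rw [hiterj] at hs hd
  exact uniq_aux n hn y hy hs hd (j' - j) hd1 hd2
    (by rw [hzfun]; exact hs') (by rw [hzfun]; exact hd')

end main

/-- If `x` is a tuple with entries in `{0,…,n-1}` and coordinate sum
`≡ (n-1)(n-2)/2 (mod n)`, then there is exactly one `j ∈ {0,…,n-1}` such that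
`shiftʲ(x)` has coordinate sum `(n-1)(n-2)/2` and `sort(shiftʲ(x))` is dominated
by `δ_n`. -/
theorem unique_shift_dominated (n : ℕ) (hn : 2 ≤ n) (x : Fin n → ℕ)
    (hx : ∀ i, x i < n)
    (hsum : ((∑ i, x i : ℕ) : ZMod n) = (((n - 1) * (n - 2) / 2 : ℕ) : ZMod n)) :
    ∃! j : ℕ, j < n ∧
      (∑ i, (shiftMod n)^[j] x i = (n - 1) * (n - 2) / 2 ∧
        dominatedByDelta n (sortDesc ((shiftMod n)^[j] x))) := by
  have hsum' : ((∑ i, x i : ℕ) : ZMod n) = ((Tn n : ℕ) : ZMod n) := hsum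
  obtain ⟨j1, hj1⟩ := exists_exact_sum n hn x hsum'
  set y : Fin n → ℕ := fun i => (x i + j1) % n with hydef
  have hy : ∀ i, y i < n := fun i => Nat.mod_lt _ (by omega)
  obtain ⟨d, hsumd, hdomd⟩ := exist_good n hn (∑ i, y i ^ 2) y hy hj1 le_rfl
  set t := j1 + d with ht
  have hyd : (fun i => (y i + d) % n) = fun i => (x i + t) % n := by
    funext i
    show ((x i + j1) % n + d) % n = (x i + t) % n
    rw [Nat.mod_add_mod, Nat.add_assoc]
  set j := t % n with hj
  have hjlt : j < n := Nat.mod_lt _ (by omega)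
  have hmodshift : (fun i => (x i + j) % n) = fun i => (x i + t) % n := by
    funext i
    rw [hj]
    conv_lhs => rw [Nat.add_mod]
    rw [Nat.mod_mod_of_dvd t (dvd_refl n), ← Nat.add_mod]
  have hiter : (shiftMod n)^[j] x = fun i => (x i + j) % n :=
    funext fun i => shift_iter n x i (hx i) j
  have hcond_sum : ∑ i, (shiftMod n)^[j] x i = (n - 1) * (n - 2) / 2 := by
    rw [hiter, hmodshift, ← hyd]
    exact hsumd
  have hcond_dom : dominatedByDelta n (sortDesc ((shiftMod n)^[j] x)) := by
    rw [hiter, hmodshift, ← hyd]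
    exact hdomd
  refine ⟨j, ⟨hjlt, hcond_sum, hcond_dom⟩, ?_⟩
  rintro j' ⟨hj'lt, hs', hd'⟩
  by_contra hne
  rcases Nat.lt_or_ge j' j with hlt | hge
  · exact no_two n hn x hx j' j hlt hjlt hs' hd' hcond_sum hcond_dom
  · exact no_two n hn x hx j j' (by omega) hj'lt hcond_sum hcond_dom hs' hd'
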